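/- Let X' ∼ ½N(μ, σ²I_d) + ½N(−μ, σ²I_d) where μ ∈ ℝ^d is a unit vector and σ > 0, and let v ∈ ℝ^d be a unit vector with α = v^⊤μ. Then E[ sgn(v^⊤X') · X' ] = ( 1 − 2Q(α/σ) ) μ + (2σ/√(2π)) · exp( −α²/(2σ²) ) · v. In particular, writing v = αμ + βυ with υ a unit vector orthogonal to μ and β = √(1−α²), this equals ( 1 − 2Q(α/σ) + (2σα/√(2π)) e^{−α²/(2σ²)} ) μ + (2σβ/√(2π)) e^{−α²/(2σ²)} υ. -/

import Mathlib

open MeasureTheory ProbabilityTheory Real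
open scoped ENNReal NNReal

/-- The standard normal CDF Φ. -/
noncomputable def stdPhi (x : ℝ) : ℝ := (gaussianReal 0 1 (Set.Iic x)).toReal

/-- Q = 1 - Φ. -/
noncomputable def stdQ (x : ℝ) : ℝ := 1 - stdPhi x

/-- Euclidean dot product on `Fin d → ℝ`. -/
def dotp {d : ℕ} (a b : Fin d → ℝ) : ℝ := ∑ i, a i * b i

/-- Isotropic Gaussian `N(m, v I_d)` on `Fin d → ℝ` (v is the variance). -/
noncomputable def gaussPi (d : ℕ) (m : Fin d → ℝ) (v : ℝ) : Measure (Fin d → ℝ) :=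
  Measure.pi fun i => gaussianReal (m i) (Real.toNNReal v)

/-- Joint law of `(X, Y)` for the binary Gaussian mixture model bGMM(μ, σ):
`Y` uniform on `{-1, 1}` and `X | Y ∼ N(Yμ, σ² I_d)`. -/
noncomputable def bGMM (d : ℕ) (m : Fin d → ℝ) (σ : ℝ) : Measure ((Fin d → ℝ) × ℝ) :=
  (1/2 : ℝ≥0∞) • (gaussPi d m (σ^2)).map (fun x => (x, (1:ℝ)))
    + (1/2 : ℝ≥0∞) • (gaussPi d (-m) (σ^2)).map (fun x => (x, (-1:ℝ)))

/-- The marginal mixture `p_μ = ½ N(μ, σ² I_d) + ½ N(-μ, σ² I_d)`. -/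
noncomputable def gmix (d : ℕ) (m : Fin d → ℝ) (σ : ℝ) : Measure (Fin d → ℝ) :=
  (1/2 : ℝ≥0∞) • gaussPi d m (σ^2) + (1/2 : ℝ≥0∞) • gaussPi d (-m) (σ^2)

/-- Sign function with values in `{-1, 1}`. -/
noncomputable def sgn (u : ℝ) : ℝ := if 0 < u then 1 else -1

section AuxProofs
open Set






noncomputable def phis (x : ℝ) : ℝ := Real.exp (-x^2/2) / Real.sqrt (2*π)

noncomputable def rhog (a s x : ℝ) : ℝ := Real.exp (-(x-a)^2/(2*s^2)) / (s * Real.sqrt (2*π))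

lemma rhog_zero_one : rhog 0 1 = phis := by
  funext x; simp [rhog, phis]

lemma phis_neg (x : ℝ) : phis (-x) = phis x := by simp [phis]

lemma rhog_nonneg {a s : ℝ} (hs : 0 ≤ s) (x : ℝ) : 0 ≤ rhog a s x := by
  apply div_nonneg (Real.exp_nonneg _)
  positivity

lemma rhog_continuous (a s : ℝ) : Continuous (rhog a s) := by
  unfold rhog; fun_prop

lemma gaussianPDFReal_eq_rhog (a : ℝ) {s : ℝ} (hs : 0 < s) (x : ℝ) :
    gaussianPDFReal a (Real.toNNReal (s^2)) x = rhog a s x := by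
  rw [gaussianPDFReal, rhog]
  rw [Real.coe_toNNReal _ (sq_nonneg s)]
  rw [show 2 * π * s^2 = (2*π) * s^2 by ring, Real.sqrt_mul (by positivity), Real.sqrt_sq hs.le]
  rw [div_eq_inv_mul, mul_comm (Real.sqrt (2*π)) s]
  ring

lemma toNNReal_sq_ne_zero {s : ℝ} (hs : 0 < s) : Real.toNNReal (s^2) ≠ 0 := by
  simp [Real.toNNReal_eq_zero, not_le]
  positivity

lemma gaussianReal_sq_eq (a : ℝ) {s : ℝ} (hs : 0 < s) :
    gaussianReal a (Real.toNNReal (s^2)) =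
      volume.withDensity (fun x => ENNReal.ofReal (rhog a s x)) := by
  rw [gaussianReal_of_var_ne_zero _ (toNNReal_sq_ne_zero hs)]
  congr 1; funext x
  rw [gaussianPDF, gaussianPDFReal_eq_rhog a hs]

lemma integral_gaussianReal_sq (a : ℝ) {s : ℝ} (hs : 0 < s) (g : ℝ → ℝ) :
    ∫ x, g x ∂(gaussianReal a (Real.toNNReal (s^2))) = ∫ x, rhog a s x * g x := by
  rw [gaussianReal_sq_eq a hs]
  have h1 : (fun x => ENNReal.ofReal (rhog a s x))
      = fun x => ((Real.toNNReal (rhog a s x) : ℝ≥0) : ℝ≥0∞) := by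
    funext x; rfl
  rw [h1, integral_withDensity_eq_integral_smul
    (((rhog_continuous a s).measurable).real_toNNReal) g]
  congr 1; funext x
  simp [NNReal.smul_def, Real.coe_toNNReal _ (rhog_nonneg hs.le x)]

lemma integrable_rhog (a : ℝ) {s : ℝ} (hs : 0 < s) : Integrable (rhog a s) := by
  have := integrable_gaussianPDFReal a (Real.toNNReal (s^2))
  refine this.congr (Filter.Eventually.of_forall fun x => ?_)
  rw [gaussianPDFReal_eq_rhog a hs]

lemma integral_rhog (a : ℝ) {s : ℝ} (hs : 0 < s) : ∫ x, rhog a s x = 1 := by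
  have := integral_gaussianPDFReal_eq_one a (toNNReal_sq_ne_zero hs)
  rw [← this]
  congr 1; funext x
  rw [gaussianPDFReal_eq_rhog a hs]

lemma integrable_id_mul_rhog (a : ℝ) {s : ℝ} (hs : 0 < s) :
    Integrable (fun x => x * rhog a s x) := by
  have hb : (0:ℝ) < 1/(2*s^2) := by positivity
  have h1 : Integrable (fun x : ℝ => (x + a) * Real.exp (-(1/(2*s^2)) * x^2)) := by
    have := (integrable_mul_exp_neg_mul_sq hb).add
      ((integrable_exp_neg_mul_sq hb).const_mul a)
    refine this.congr (Filter.Eventually.of_forall fun x => ?_)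
    simp only [Pi.add_apply]; ring
  have h2 := h1.comp_sub_right a
  have h3 := h2.div_const (s * Real.sqrt (2*π))
  refine h3.congr (Filter.Eventually.of_forall fun x => ?_)
  simp only [rhog]
  rw [show x - a + a = x by ring]
  rw [show -(1/(2*s^2)) * (x-a)^2 = -(x-a)^2/(2*s^2) by ring]
  ring

lemma integrable_id_mul_phis : Integrable (fun u : ℝ => u * phis u) := by
  have := integrable_id_mul_rhog 0 one_pos
  simpa [rhog_zero_one] using this

lemma hasDerivAt_neg_phis (u : ℝ) : HasDerivAt (fun u => -phis u) (u * phis u) u := by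
  have h1 : HasDerivAt (fun u : ℝ => -u^2/2) (-u) u := by
    have := ((hasDerivAt_pow 2 u).neg).div_const 2
    simpa using this.congr_deriv (by ring)
  have h2 := (h1.exp).div_const (Real.sqrt (2*π))
  have h3 := h2.neg
  refine h3.congr_deriv ?_
  simp only [phis]
  ring

lemma tendsto_phis_atTop : Filter.Tendsto phis Filter.atTop (nhds 0) := by
  have h1 : Filter.Tendsto (fun u : ℝ => -u^2/2) Filter.atTop Filter.atBot := by
    apply Filter.Tendsto.atBot_div_const two_pos
    apply Filter.tendsto_neg_atBot_iff.mpr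
    exact (Filter.tendsto_pow_atTop (two_ne_zero))
  have := (Real.tendsto_exp_atBot).comp h1
  have h2 := this.div_const (Real.sqrt (2*π))
  rw [zero_div] at h2
  exact h2.congr fun u => rfl

lemma tendsto_phis_atBot : Filter.Tendsto phis Filter.atBot (nhds 0) := by
  have := tendsto_phis_atTop.comp (Filter.tendsto_neg_atBot_atTop)
  refine this.congr fun u => ?_
  simp [Function.comp, phis_neg]

lemma integral_Ioi_id_phis (c : ℝ) : ∫ u in Ioi c, u * phis u = phis c := by
  have := integral_Ioi_of_hasDerivAt_of_tendsto'
    (f := fun u => -phis u) (f' := fun u => u * phis u) (a := c)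
    (fun x _ => hasDerivAt_neg_phis x) integrable_id_mul_phis.integrableOn
    (tendsto_phis_atTop.neg.congr (by simp))
  simpa using this

lemma integral_Iic_id_phis (c : ℝ) : ∫ u in Iic c, u * phis u = -phis c := by
  have := integral_Iic_of_hasDerivAt_of_tendsto'
    (f := fun u => -phis u) (f' := fun u => u * phis u) (a := c)
    (fun x _ => hasDerivAt_neg_phis x) integrable_id_mul_phis.integrableOn
    (tendsto_phis_atBot.neg.congr (by simp))
  simpa using this

lemma integral_id_phis : ∫ u : ℝ, u * phis u = 0 := by
  rw [← intervalIntegral.integral_Iic_add_Ioi (b := (0:ℝ)) integrable_id_mul_phis.integrableOn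
    integrable_id_mul_phis.integrableOn, integral_Iic_id_phis, integral_Ioi_id_phis]
  ring

lemma measurable_sgn : Measurable sgn :=
  Measurable.ite (measurableSet_lt measurable_const measurable_id) measurable_const
    measurable_const

lemma abs_sgn (u : ℝ) : |sgn u| = 1 := by
  rw [sgn]; split_ifs <;> simp

lemma one_eq_toNNReal : (1 : ℝ≥0) = Real.toNNReal (1^2) := by simp

lemma integral_gaussianReal_one (g : ℝ → ℝ) :
    ∫ x, g x ∂(gaussianReal 0 1) = ∫ x, phis x * g x := by
  rw [one_eq_toNNReal, integral_gaussianReal_sq 0 one_pos, rhog_zero_one]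

lemma integrable_phis : Integrable phis := by
  have := integrable_rhog 0 one_pos; rwa [rhog_zero_one] at this

lemma integral_phis : ∫ x, phis x = 1 := by
  have := integral_rhog 0 one_pos; rwa [rhog_zero_one] at this

lemma gaussianReal_Iic (a : ℝ) {s : ℝ} (hs : 0 < s) (c : ℝ) :
    gaussianReal a (Real.toNNReal (s^2)) (Iic c)
      = ENNReal.ofReal (∫ x in Iic c, rhog a s x) := by
  rw [gaussianReal_sq_eq a hs, withDensity_apply _ measurableSet_Iic]
  rw [← ofReal_integral_eq_lintegral_ofReal (integrable_rhog a hs).integrableOn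
    (Filter.Eventually.of_forall fun x => rhog_nonneg hs.le x)]

lemma stdPhi_eq (c : ℝ) : stdPhi c = ∫ x in Iic c, phis x := by
  rw [stdPhi, one_eq_toNNReal, gaussianReal_Iic 0 one_pos, rhog_zero_one,
    ENNReal.toReal_ofReal]
  exact setIntegral_nonneg measurableSet_Iic fun x _ => by
    rw [← rhog_zero_one]; exact rhog_nonneg one_pos.le x

lemma stdPhi_neg (c : ℝ) : stdPhi (-c) = 1 - stdPhi c := by
  have h1 : ∫ x in Iic (-c), phis (-x) = ∫ x in Ioi c, phis x := by
    simpa using integral_comp_neg_Iic (-c) phis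
  simp_rw [phis_neg] at h1
  rw [stdPhi_eq, stdPhi_eq, h1]
  have h2 := intervalIntegral.integral_Iic_add_Ioi (b := c)
    integrable_phis.integrableOn integrable_phis.integrableOn
  rw [integral_phis] at h2
  linarith

lemma L1 {σ A : ℝ} (hσ : 0 < σ) :
    ∫ w, sgn (A + σ*w) ∂(gaussianReal 0 1) = 1 - 2 * stdQ (A/σ) := by
  have hpt : ∀ w, sgn (A + σ*w)
      = 1 - 2 * Set.indicator (Iic (-(A/σ))) (fun _ => (1:ℝ)) w := by
    intro w
    have key : (0 < A + σ*w) ↔ ¬ (w ≤ -(A/σ)) := by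
      rw [not_le, ← neg_div, div_lt_iff₀ hσ]
      constructor <;> intro h <;> nlinarith
    rw [sgn, Set.indicator_apply]
    by_cases h : 0 < A + σ*w
    · rw [if_pos h, if_neg (by simpa using key.mp h)]; norm_num
    · rw [if_neg h, if_pos]
      · norm_num
      · simpa using not_not.mp (fun hc => h (key.mpr hc))
  simp_rw [hpt]
  rw [integral_sub (integrable_const 1)
    (((integrable_const (1:ℝ)).indicator measurableSet_Iic).const_mul 2),
    integral_const, integral_const_mul, integral_indicator_const _ measurableSet_Iic]
  have : (gaussianReal 0 1).real (Iic (-(A/σ))) = stdPhi (-(A/σ)) := rfl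
  simp only [probReal_univ, measure_univ, ENNReal.toReal_one, one_smul, smul_eq_mul, mul_one, this,
    stdPhi_neg, stdQ]

lemma measurable_phis : Measurable phis := by
  rw [← rhog_zero_one]; exact (rhog_continuous 0 1).measurable

lemma phis_nonneg (u : ℝ) : 0 ≤ phis u := by
  rw [← rhog_zero_one]; exact rhog_nonneg one_pos.le u

lemma integrable_sgn_mul_id {A B : ℝ} :
    Integrable (fun u => phis u * (sgn (A + B*u) * u)) := by
  refine (integrable_id_mul_phis.abs).mono' ?_ (Filter.Eventually.of_forall fun u => ?_)
  · exact measurable_phis.aestronglyMeasurable.mul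
      (((measurable_sgn.comp (by fun_prop)).mul measurable_id).aestronglyMeasurable)
  · apply le_of_eq
    rw [Real.norm_eq_abs, abs_mul, abs_mul, abs_sgn, one_mul, abs_mul]
    ring

lemma L2pos {A B : ℝ} (hB : 0 < B) :
    ∫ u, sgn (A + B*u) * u ∂(gaussianReal 0 1) = 2 * phis (A/B) := by
  rw [integral_gaussianReal_one]
  set c := -(A/B) with hc
  have h1 : ∀ u ∈ Iic c, phis u * (sgn (A + B*u) * u) = -(u * phis u) := by
    intro u hu
    have : ¬ (0 < A + B*u) := by
      simp only [mem_Iic, hc] at hu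
      have : B * u ≤ B * c := mul_le_mul_of_nonneg_left hu hB.le
      rw [hc] at this
      have h2 : B * -(A/B) = -A := by field_simp; try ring
      push_neg; nlinarith
    rw [sgn, if_neg this]; ring
  have h2 : ∀ u ∈ Ioi c, phis u * (sgn (A + B*u) * u) = u * phis u := by
    intro u hu
    have : 0 < A + B*u := by
      simp only [mem_Ioi, hc] at hu
      have : B * c < B * u := mul_lt_mul_of_pos_left hu hB
      have h2 : B * -(A/B) = -A := by field_simp; try ring
      rw [hc, h2] at this; linarith
    rw [sgn, if_pos this]; ring
  rw [← intervalIntegral.integral_Iic_add_Ioi (b := c)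
    integrable_sgn_mul_id.integrableOn integrable_sgn_mul_id.integrableOn]
  rw [setIntegral_congr_fun measurableSet_Iic h1, setIntegral_congr_fun measurableSet_Ioi h2]
  rw [integral_neg, integral_Iic_id_phis, integral_Ioi_id_phis]
  rw [hc, phis_neg]; ring

lemma L2neg {A B : ℝ} (hB : B < 0) :
    ∫ u, sgn (A + B*u) * u ∂(gaussianReal 0 1) = -(2 * phis (A/B)) := by
  rw [integral_gaussianReal_one]
  set c := -(A/B) with hc
  have hBc : B * c = -A := by rw [hc, mul_neg, mul_comm, div_mul_cancel₀ _ hB.ne]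
  have h1 : ∀ u ∈ Iio c, phis u * (sgn (A + B*u) * u) = u * phis u := by
    intro u hu
    have : 0 < A + B*u := by
      simp only [mem_Iio] at hu
      have := mul_lt_mul_of_neg_left hu hB
      rw [hBc] at this; linarith
    rw [sgn, if_pos this]; ring
  have h2 : ∀ u ∈ Ici c, phis u * (sgn (A + B*u) * u) = -(u * phis u) := by
    intro u hu
    have : ¬ (0 < A + B*u) := by
      simp only [mem_Ici] at hu
      have := mul_le_mul_of_nonpos_left hu hB.le
      rw [hBc] at this; push_neg; linarith
    rw [sgn, if_neg this]; ring
  rw [← intervalIntegral.integral_Iio_add_Ici (b := c)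
    integrable_sgn_mul_id.integrableOn integrable_sgn_mul_id.integrableOn]
  rw [setIntegral_congr_fun measurableSet_Iio h1, setIntegral_congr_fun measurableSet_Ici h2]
  rw [← MeasureTheory.integral_Iic_eq_integral_Iio, MeasureTheory.integral_Ici_eq_integral_Ioi]
  rw [integral_neg, integral_Iic_id_phis, integral_Ioi_id_phis, hc, phis_neg]
  ring

lemma integral_id_gauss : ∫ u, u ∂(gaussianReal 0 1) = 0 := by
  rw [integral_gaussianReal_one]
  rw [show (fun x => phis x * x) = fun x => x * phis x from funext fun x => mul_comm _ _]
  exact integral_id_phis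

lemma L2zero {A : ℝ} : ∫ u, sgn (A + 0*u) * u ∂(gaussianReal 0 1) = 0 := by
  simp_rw [zero_mul, add_zero]
  rw [integral_gaussianReal_one]
  simp_rw [show ∀ x:ℝ, phis x * (sgn A * x) = sgn A * (x * phis x) from fun x => by ring]
  rw [integral_const_mul, integral_id_phis, mul_zero]

lemma rhog_conv {a b c s : ℝ} (hb : 0 < b) (hs : 0 < s) (u : ℝ) :
    ∫ x, rhog a b x * rhog c s (u - x) = rhog (a+c) (Real.sqrt (b^2+s^2)) u := by
  set t := Real.sqrt (b^2+s^2) with htdef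
  have ht : 0 < t := Real.sqrt_pos.mpr (by positivity)
  have ht2 : t^2 = b^2+s^2 := Real.sq_sqrt (by positivity)
  set r := b*s/t with hrdef
  have hr : 0 < r := by positivity
  set m := a + b^2*(u-a-c)/t^2 with hmdef
  have key : ∀ x, rhog a b x * rhog c s (u-x) = rhog (a+c) t u * rhog m r x := by
    intro x
    simp only [rhog]
    rw [div_mul_div_comm, div_mul_div_comm, ← Real.exp_add, ← Real.exp_add]
    have hden : b * Real.sqrt (2*π) * (s * Real.sqrt (2*π))
        = t * Real.sqrt (2*π) * (r * Real.sqrt (2*π)) := by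
      have : t * r = b * s := by
        rw [hrdef, mul_div_assoc', mul_comm t (b*s), mul_div_assoc, div_self ht.ne', mul_one]
      calc b * Real.sqrt (2*π) * (s * Real.sqrt (2*π)) = (b*s) * (Real.sqrt (2*π) * Real.sqrt (2*π)) := by ring
        _ = (t*r) * (Real.sqrt (2*π) * Real.sqrt (2*π)) := by rw [this]
        _ = t * Real.sqrt (2*π) * (r * Real.sqrt (2*π)) := by ring
    rw [hden]
    congr 2
    have hr2 : r^2 = b^2*s^2/(b^2+s^2) := by
      rw [hrdef, div_pow, ht2, mul_pow]
    rw [hmdef, hr2, ht2]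
    have hbs : b^2+s^2 ≠ 0 := by positivity
    field_simp
    ring
  simp_rw [key]
  rw [integral_const_mul, integral_rhog m hr, mul_one]

lemma rhog_le {c w : ℝ} (hw : 0 < w) (x : ℝ) : rhog c w x ≤ 1/(w * Real.sqrt (2*π)) := by
  have h1 : Real.exp (-(x-c)^2/(2*w^2)) ≤ 1 := by
    rw [Real.exp_le_one_iff]
    exact div_nonpos_of_nonpos_of_nonneg (neg_nonpos.mpr (sq_nonneg _)) (by positivity)
  rw [rhog]
  gcongr

lemma integrable_rhog_mul_rhog {a s c w : ℝ} (hs : 0 < s) (hw : 0 < w) (u : ℝ) :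
    Integrable (fun x => rhog a s x * rhog c w (u - x)) := by
  refine ((integrable_rhog a hs).const_mul (1/(w * Real.sqrt (2*π)))).mono'
    ?_ (Filter.Eventually.of_forall fun x => ?_)
  · exact ((rhog_continuous a s).mul ((rhog_continuous c w).comp
      (continuous_const.sub continuous_id))).aestronglyMeasurable
  · rw [Real.norm_eq_abs, abs_mul, abs_of_nonneg (rhog_nonneg hs.le x),
      abs_of_nonneg (rhog_nonneg hw.le _), mul_comm (1/(w * Real.sqrt (2*π)))]
    exact mul_le_mul_of_nonneg_left (rhog_le hw _) (rhog_nonneg hs.le x)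

lemma map_add_gauss {a c : ℝ} {A B : ℝ} (hA : 0 ≤ A) (hB : 0 ≤ B) :
    ((gaussianReal a A.toNNReal).prod (gaussianReal c B.toNNReal)).map
      (fun p : ℝ × ℝ => p.1 + p.2) = gaussianReal (a+c) (A+B).toNNReal := by
  rcases hA.eq_or_lt with hA0 | hA0
  · rw [← hA0, Real.toNNReal_zero, gaussianReal_zero_var, Measure.dirac_prod,
      Measure.map_map (by fun_prop) (by fun_prop)]
    have h1 : ((fun p : ℝ×ℝ => p.1 + p.2) ∘ (Prod.mk a)) = (a + ·) := rfl
    rw [h1, gaussianReal_map_const_add, add_comm c a, zero_add]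
  rcases hB.eq_or_lt with hB0 | hB0
  · rw [← hB0, Real.toNNReal_zero, gaussianReal_zero_var, Measure.prod_dirac,
      Measure.map_map (by fun_prop) (by fun_prop)]
    have h1 : ((fun p : ℝ×ℝ => p.1 + p.2) ∘ (fun x => (x, c))) = (· + c) := rfl
    rw [h1, gaussianReal_map_add_const, add_zero]
  -- both positive
  set s := Real.sqrt A with hsdef
  set w := Real.sqrt B with hwdef
  have hs : 0 < s := Real.sqrt_pos.mpr hA0
  have hw : 0 < w := Real.sqrt_pos.mpr hB0
  have hs2 : s^2 = A := Real.sq_sqrt hA0.le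
  have hw2 : w^2 = B := Real.sq_sqrt hB0.le
  set t := Real.sqrt (s^2 + w^2) with htdef
  have ht : 0 < t := Real.sqrt_pos.mpr (by positivity)
  have ht2 : t^2 = A + B := by rw [htdef, Real.sq_sqrt (by positivity), hs2, hw2]
  have hmadd : Measurable (fun p : ℝ × ℝ => p.1 + p.2) := measurable_fst.add measurable_snd
  haveI : IsProbabilityMeasure (((gaussianReal a A.toNNReal).prod
      (gaussianReal c B.toNNReal)).map (fun p : ℝ × ℝ => p.1 + p.2)) :=
    Measure.isProbabilityMeasure_map hmadd.aemeasurable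
  refine Measure.ext_of_Iic _ _ fun q => ?_
  rw [Measure.map_apply hmadd measurableSet_Iic,
    Measure.prod_apply (hmadd measurableSet_Iic)]
  have hsec : ∀ x : ℝ, (Prod.mk x ⁻¹' ((fun p : ℝ×ℝ => p.1+p.2) ⁻¹' Iic q)) = Iic (q - x) := by
    intro x; ext y
    simp only [mem_preimage, mem_Iic]
    constructor <;> intro h <;> linarith
  simp_rw [hsec]
  have hBform : B.toNNReal = Real.toNNReal (w^2) := by rw [hw2]
  have hAform : A.toNNReal = Real.toNNReal (s^2) := by rw [hs2]
  have hinner : ∀ x : ℝ, gaussianReal c B.toNNReal (Iic (q - x))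
      = ∫⁻ u, Set.indicator (Iic q) (fun u => ENNReal.ofReal (rhog c w (u - x))) u := by
    intro x
    rw [hBform, gaussianReal_sq_eq c hw, withDensity_apply _ measurableSet_Iic,
      ← lintegral_indicator measurableSet_Iic]
    have := lintegral_add_right_eq_self (μ := volume)
      (fun y => Set.indicator (Iic q) (fun u => ENNReal.ofReal (rhog c w (u - x))) y) x
    rw [← this]
    congr 1; funext y
    rw [Set.indicator_apply, Set.indicator_apply]
    simp only [mem_Iic]
    by_cases hy : y ≤ q - x
    · rw [if_pos hy, if_pos (by linarith), add_sub_cancel_right]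
    · rw [if_neg hy, if_neg (by intro h; exact hy (by linarith))]
  simp_rw [hinner, Set.indicator_apply, Set.mem_Iic]
  rw [hAform, gaussianReal_sq_eq a hs]
  have hmeas1 : Measurable (fun x => ENNReal.ofReal (rhog a s x)) :=
    ((rhog_continuous a s).measurable).ennreal_ofReal
  have hmeasF : Measurable (fun z : ℝ × ℝ =>
      if z.2 ≤ q then ENNReal.ofReal (rhog c w (z.2 - z.1)) else 0) := by
    refine Measurable.ite (measurableSet_le measurable_snd measurable_const) ?_ measurable_const
    exact ((rhog_continuous c w).measurable.comp (measurable_snd.sub measurable_fst)).ennreal_ofReal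
  rw [lintegral_withDensity_eq_lintegral_mul _ hmeas1
    (Measurable.lintegral_prod_right' (f := fun z : ℝ × ℝ =>
      if z.2 ≤ q then ENNReal.ofReal (rhog c w (z.2 - z.1)) else 0) hmeasF)]
  simp only [Pi.mul_apply]
  simp_rw [← lintegral_const_mul' _ _ ENNReal.ofReal_ne_top]
  rw [lintegral_lintegral_swap (((hmeas1.comp measurable_fst).mul hmeasF).aemeasurable)]
  have hpt : ∀ u : ℝ, (∫⁻ x, ENNReal.ofReal (rhog a s x)
        * (if u ≤ q then ENNReal.ofReal (rhog c w (u - x)) else 0))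
      = Set.indicator (Iic q) (fun u => ENNReal.ofReal (rhog (a+c) t u)) u := by
    intro u
    rw [Set.indicator_apply]
    simp only [Set.mem_Iic]
    by_cases hu : u ≤ q
    · simp only [if_pos hu]
      simp_rw [← ENNReal.ofReal_mul (rhog_nonneg hs.le _)]
      rw [← ofReal_integral_eq_lintegral_ofReal (integrable_rhog_mul_rhog hs hw u)
        (Filter.Eventually.of_forall fun x =>
          mul_nonneg (rhog_nonneg hs.le x) (rhog_nonneg hw.le _))]
      rw [rhog_conv hs hw u]
    · simp only [if_neg hu, mul_zero, lintegral_zero]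
  simp_rw [hpt]
  rw [lintegral_indicator measurableSet_Iic]
  have hfin : (A+B).toNNReal = Real.toNNReal (t^2) := by rw [ht2]
  rw [hfin, gaussianReal_sq_eq (a+c) ht, withDensity_apply _ measurableSet_Iic]

lemma nnreal_sq_mul_one (c : ℝ) :
    (⟨c^2, sq_nonneg c⟩ : ℝ≥0) * 1 = Real.toNNReal (c^2) := by
  ext
  simp [Real.coe_toNNReal _ (sq_nonneg c)]

lemma map_sum_pi_gauss : ∀ (n : ℕ) (c : Fin n → ℝ),
    (Measure.pi fun _ : Fin n => gaussianReal 0 1).map (fun x => ∑ j, c j * x j)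
      = gaussianReal 0 (Real.toNNReal (∑ j, (c j)^2)) := by
  intro n
  induction n with
  | zero =>
    intro c
    rw [show (fun x : Fin 0 → ℝ => ∑ j, c j * x j) = (fun _ => 0) by
      funext x; simp]
    rw [Measure.map_const]
    simp [Real.toNNReal_zero, gaussianReal_zero_var]
  | succ n ih =>
    intro c
    have hmp := measurePreserving_piFinSuccAbove (fun _ : Fin (n+1) => gaussianReal 0 1) 0
    set e := MeasurableEquiv.piFinSuccAbove (fun _ : Fin (n+1) => ℝ) 0 with hedef
    have hsymm := hmp.symm e
    rw [← hsymm.map_eq, Measure.map_map (by fun_prop) (by fun_prop)]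
    have hcomp : ((fun x : Fin (n+1) → ℝ => ∑ j, c j * x j) ∘ e.symm)
        = fun p : ℝ × (Fin n → ℝ) => (c 0 * p.1) + (∑ j, c j.succ * p.2 j) := by
      funext p
      simp only [Function.comp_apply, hedef, MeasurableEquiv.piFinSuccAbove,
        MeasurableEquiv.symm_mk, MeasurableEquiv.coe_mk, Equiv.symm_symm]
      rw [Fin.sum_univ_succ]
      simp [Fin.insertNthEquiv, Fin.zero_succAbove]
    rw [hcomp]
    have hsplit : (fun p : ℝ × (Fin n → ℝ) => (c 0 * p.1) + (∑ j, c j.succ * p.2 j))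
        = (fun q : ℝ × ℝ => q.1 + q.2)
          ∘ (Prod.map (fun u => c 0 * u) (fun y : Fin n → ℝ => ∑ j, c j.succ * y j)) := rfl
    rw [hsplit, ← Measure.map_map (g := fun q : ℝ × ℝ => q.1 + q.2) (f := Prod.map (fun u => c 0 * u) (fun y : Fin n → ℝ => ∑ j, c j.succ * y j)) (by fun_prop) (by fun_prop)]
    rw [← Measure.map_prod_map _ _ (by fun_prop) (by fun_prop)]
    have h1 : (gaussianReal 0 1).map (fun u => c 0 * u)
        = gaussianReal 0 (Real.toNNReal ((c 0)^2)) := by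
      have := gaussianReal_map_const_mul (μ := 0) (v := 1) (c 0)
      rw [show ((c 0) * · ) = fun u => c 0 * u from rfl] at this
      rw [this, mul_zero, show ∀ h, NNReal.mk ((c 0)^2) h * 1 = Real.toNNReal ((c 0)^2) from fun h => by ext; simp [Real.coe_toNNReal _ (sq_nonneg (c 0))]]
    rw [h1, ih (fun j => c j.succ), map_add_gauss (sq_nonneg _)
      (Finset.sum_nonneg fun j _ => sq_nonneg _)]
    rw [add_zero, ← Fin.sum_univ_succ (fun j => (c j)^2)]

lemma map_eval_pi {d : ℕ} (i : Fin d) :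
    (Measure.pi fun _ : Fin d => gaussianReal 0 1).map (fun x => x i)
      = gaussianReal 0 1 := by
  set c : Fin d → ℝ := Pi.single i 1 with hcdef
  have h := map_sum_pi_gauss d c
  have h1 : (fun x : Fin d → ℝ => ∑ j, c j * x j) = fun x => x i := by
    funext x
    rw [Finset.sum_eq_single i]
    · simp [hcdef]
    · intro b _ hb; simp [hcdef, Pi.single_apply, hb]
    · simp
  have h2 : (∑ j, (c j)^2) = 1 := by
    rw [Finset.sum_eq_single i]
    · simp [hcdef]
    · intro b _ hb; simp [hcdef, Pi.single_apply, hb]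
    · simp
  rw [h1, h2] at h
  simpa using h

lemma integrable_id_gauss : Integrable (fun x : ℝ => x) (gaussianReal 0 1) := by
  rw [one_eq_toNNReal, gaussianReal_sq_eq 0 one_pos, rhog_zero_one]
  rw [integrable_withDensity_iff measurable_phis.ennreal_ofReal
    (Filter.Eventually.of_forall fun x => ENNReal.ofReal_lt_top)]
  refine integrable_id_mul_phis.congr (Filter.Eventually.of_forall fun x => ?_)
  show x * phis x = x * (ENNReal.ofReal (phis x)).toReal
  rw [ENNReal.toReal_ofReal (phis_nonneg x)]

lemma integrable_eval_pi {d : ℕ} (i : Fin d) :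
    Integrable (fun z : Fin d → ℝ => z i) (Measure.pi fun _ : Fin d => gaussianReal 0 1) := by
  have h1 : AEStronglyMeasurable (fun x : ℝ => x)
      ((Measure.pi fun _ : Fin d => gaussianReal 0 1).map (fun z => z i)) := by
    rw [map_eval_pi]; exact measurable_id.aestronglyMeasurable
  have h2 := integrable_map_measure h1 (measurable_pi_apply i).aemeasurable
  rw [map_eval_pi] at h2
  exact h2.mp integrable_id_gauss

lemma measurable_wsum {d : ℕ} (v : Fin d → ℝ) :
    Measurable (fun z : Fin d → ℝ => ∑ j, v j * z j) :=
  Finset.measurable_sum Finset.univ fun j _ => by fun_prop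

lemma lemA {d : ℕ} {v : Fin d → ℝ} (hv : ∑ j, (v j)^2 = 1) {σ : ℝ} (hσ : 0 < σ) (α : ℝ) :
    ∫ z, sgn (α + σ * ∑ j, v j * z j) ∂(Measure.pi fun _ : Fin d => gaussianReal 0 1)
      = 1 - 2 * stdQ (α/σ) := by
  have hmap := map_sum_pi_gauss d v
  rw [hv, Real.toNNReal_one] at hmap
  have := integral_map (μ := Measure.pi fun _ : Fin d => gaussianReal 0 1)
    (φ := fun z => ∑ j, v j * z j) (f := fun w => sgn (α + σ * w))
    (measurable_wsum v).aemeasurable ?_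
  · rw [hmap] at this
    rw [← this, L1 hσ]
  · rw [hmap]
    exact (measurable_sgn.comp (by fun_prop)).aestronglyMeasurable

lemma continuous_phis : Continuous phis := by
  rw [← rhog_zero_one]; exact rhog_continuous 0 1

lemma phis_eq_mul_rhog {b : ℝ} (hb : 0 < b) (σ : ℝ) (hσ : 0 < σ) (α w : ℝ) :
    phis ((α + σ*w)/(σ * b)) = b * rhog (-(α/σ)) b w := by
  rw [phis, rhog]
  have h1 : w - (-(α/σ)) = (α + σ*w)/σ := by field_simp; ring
  rw [h1]
  have h2 : ((α + σ*w)/(σ * b))^2 = ((α+σ*w)/σ)^2/b^2 := by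
    rw [div_pow, div_pow, mul_pow]
    rw [div_div]
  rw [h2]
  rw [show -(((α+σ*w)/σ)^2/b^2)/2 = -((α+σ*w)/σ)^2/(2*b^2) by ring]
  field_simp

lemma rhog_zero_sub (τ w : ℝ) : rhog 0 τ (0 - w) = rhog 0 τ w := by
  rw [rhog, rhog]; ring_nf

lemma lemB {n : ℕ} {v : Fin (n+1) → ℝ} (hv : ∑ j, (v j)^2 = 1) {σ : ℝ} (hσ : 0 < σ)
    (α : ℝ) (i : Fin (n+1)) :
    ∫ z, sgn (α + σ * ∑ j, v j * z j) * z i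
        ∂(Measure.pi fun _ : Fin (n+1) => gaussianReal 0 1)
      = 2 * v i * phis (α/σ) := by
  set γ := gaussianReal 0 1 with hγdef
  set P : Measure (Fin n → ℝ) := Measure.pi fun _ => γ with hPdef
  have hmp := measurePreserving_piFinSuccAbove (fun _ : Fin (n+1) => γ) i
  set e := MeasurableEquiv.piFinSuccAbove (fun _ : Fin (n+1) => ℝ) i with hedef
  have hsymm := hmp.symm e
  rw [← hsymm.map_eq, integral_map_equiv]
  set T : (Fin n → ℝ) → ℝ := fun y => ∑ j, v (i.succAbove j) * y j with hTdef
  have hpt : ∀ p : ℝ × (Fin n → ℝ),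
      sgn (α + σ * ∑ j, v j * (e.symm p) j) * (e.symm p) i
        = sgn ((α + σ * T p.2) + (σ * v i) * p.1) * p.1 := by
    intro p
    have hsame : (e.symm p) i = p.1 := by
      simp [hedef, MeasurableEquiv.piFinSuccAbove, Fin.insertNthEquiv]
    have hsum : ∑ j, v j * (e.symm p) j = v i * p.1 + T p.2 := by
      rw [Fin.sum_univ_succAbove (fun j => v j * (e.symm p) j) i, hTdef]
      simp [hedef, MeasurableEquiv.piFinSuccAbove, Fin.insertNthEquiv]
    rw [hsame, hsum]
    congr 2
    ring
  simp_rw [hpt]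
  have hmT : Measurable T := measurable_wsum _
  have hmin : Measurable (fun p : ℝ × (Fin n → ℝ) =>
      (α + σ * T p.2) + (σ * v i) * p.1) := by
    exact (measurable_const.add ((hmT.comp measurable_snd).const_mul σ)).add
      (measurable_fst.const_mul (σ * v i))
  have hint : Integrable (fun p : ℝ × (Fin n → ℝ) =>
      sgn ((α + σ * T p.2) + (σ * v i) * p.1) * p.1) (γ.prod P) := by
    have hfst : Integrable (fun p : ℝ × (Fin n → ℝ) => p.1) (γ.prod P) := by
      have hm : (γ.prod P).map Prod.fst = γ := by
        rw [Measure.map_fst_prod]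
        simp [hPdef]
      have h1 : AEStronglyMeasurable (fun x : ℝ => x) ((γ.prod P).map Prod.fst) := by
        rw [hm]; exact measurable_id.aestronglyMeasurable
      have h2 := integrable_map_measure h1 measurable_fst.aemeasurable
      rw [hm] at h2
      exact h2.mp integrable_id_gauss
    refine hfst.abs.mono' ?_ (Filter.Eventually.of_forall fun p => ?_)
    · exact ((measurable_sgn.comp hmin).mul measurable_fst).aestronglyMeasurable
    · rw [Real.norm_eq_abs, abs_mul, abs_sgn, one_mul]
  rw [integral_prod_symm _ hint]
  by_cases hvi : v i = 0
  · have hz : ∀ y, ∫ u, sgn ((α + σ * T y) + (σ * v i) * u) * u ∂γ = 0 := by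
      intro y
      rw [hvi, mul_zero]
      exact L2zero
    simp_rw [hz, hvi]
    simp
  have hmapT := map_sum_pi_gauss n (fun j => v (i.succAbove j))
  set s2 := ∑ j, (v (i.succAbove j))^2 with hs2def
  have hs2v : s2 = 1 - (v i)^2 := by
    have := Fin.sum_univ_succAbove (fun j => (v j)^2) i
    rw [this] at hv
    linarith
  have hs2nn : (0:ℝ) ≤ s2 := Finset.sum_nonneg fun j _ => sq_nonneg _
  rcases lt_or_gt_of_ne hvi with hneg | hpos
  · -- v i < 0
    have hbpos : (0:ℝ) < -(v i) := by linarith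
    have hB : σ * v i < 0 := mul_neg_of_pos_of_neg hσ hneg
    have hinner : ∀ y, ∫ u, sgn ((α + σ * T y) + (σ * v i) * u) * u ∂γ
        = -(2 * phis ((α + σ * T y)/(σ * v i))) := fun y => L2neg hB
    have hphis : ∀ x : ℝ, phis (x/(σ * v i)) = phis (x/(σ * (-(v i)))) := by
      intro x
      rw [show x/(σ * (-(v i))) = -(x/(σ * v i)) by rw [mul_neg, div_neg], phis_neg]
    simp_rw [hinner, hphis]
    have houter : ∫ y, -(2 * phis ((α + σ * T y)/(σ * (-(v i))))) ∂P
        = ∫ w, -(2 * phis ((α + σ * w)/(σ * (-(v i)))))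
            ∂(gaussianReal 0 (Real.toNNReal s2)) := by
      rw [← hmapT, integral_map hmT.aemeasurable]
      exact ((continuous_const.mul (continuous_phis.comp
        ((continuous_const.add (continuous_const.mul continuous_id)).div_const
          _))).neg).aestronglyMeasurable
    rw [houter]
    rcases hs2nn.eq_or_lt with h0 | hs2pos
    · rw [← h0, Real.toNNReal_zero, gaussianReal_zero_var, integral_dirac]
      have hv1 : v i = -1 := by nlinarith
      rw [hv1]
      norm_num
    · set τ := Real.sqrt s2 with hτdef
      have hτ : 0 < τ := Real.sqrt_pos.mpr hs2pos
      have hτ2 : τ^2 = s2 := Real.sq_sqrt hs2pos.le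
      rw [show Real.toNNReal s2 = Real.toNNReal (τ^2) by rw [hτ2]]
      rw [integral_gaussianReal_sq 0 hτ]
      have hkey : ∀ w, rhog 0 τ w * (-(2 * phis ((α + σ*w)/(σ * (-(v i))))))
          = (2 * v i) * (rhog (-(α/σ)) (-(v i)) w * rhog 0 τ (0 - w)) := by
        intro w
        rw [phis_eq_mul_rhog hbpos σ hσ, rhog_zero_sub]
        ring
      simp_rw [hkey]
      rw [integral_const_mul, rhog_conv hbpos hτ 0]
      have h1 : (-(v i))^2 + τ^2 = 1 := by rw [hτ2, hs2v]; ring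
      rw [h1, Real.sqrt_one]
      have h2 : rhog (-(α/σ) + 0) 1 0 = phis (α/σ) := by
        rw [rhog, phis]
        norm_num
      rw [h2]
  · -- v i > 0
    have hB : 0 < σ * v i := mul_pos hσ hpos
    have hinner : ∀ y, ∫ u, sgn ((α + σ * T y) + (σ * v i) * u) * u ∂γ
        = 2 * phis ((α + σ * T y)/(σ * v i)) := fun y => L2pos hB
    simp_rw [hinner]
    have houter : ∫ y, 2 * phis ((α + σ * T y)/(σ * v i)) ∂P
        = ∫ w, 2 * phis ((α + σ * w)/(σ * v i)) ∂(gaussianReal 0 (Real.toNNReal s2)) := by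
      rw [← hmapT, integral_map hmT.aemeasurable]
      exact (continuous_const.mul (continuous_phis.comp
        ((continuous_const.add (continuous_const.mul continuous_id)).div_const _))).aestronglyMeasurable
    rw [houter]
    rcases hs2nn.eq_or_lt with h0 | hs2pos
    · rw [← h0, Real.toNNReal_zero, gaussianReal_zero_var, integral_dirac]
      have hv1 : v i = 1 := by nlinarith
      rw [hv1]
      norm_num
    · set τ := Real.sqrt s2 with hτdef
      have hτ : 0 < τ := Real.sqrt_pos.mpr hs2pos
      have hτ2 : τ^2 = s2 := Real.sq_sqrt hs2pos.le
      rw [show Real.toNNReal s2 = Real.toNNReal (τ^2) by rw [hτ2]]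
      rw [integral_gaussianReal_sq 0 hτ]
      have hkey : ∀ w, rhog 0 τ w * (2 * phis ((α + σ*w)/(σ * v i)))
          = (2 * v i) * (rhog (-(α/σ)) (v i) w * rhog 0 τ (0 - w)) := by
        intro w
        rw [phis_eq_mul_rhog hpos σ hσ, rhog_zero_sub]
        ring
      simp_rw [hkey]
      rw [integral_const_mul, rhog_conv hpos hτ 0]
      have h1 : (v i)^2 + τ^2 = 1 := by rw [hτ2, hs2v]; ring
      rw [h1, Real.sqrt_one]
      have h2 : rhog (-(α/σ) + 0) 1 0 = phis (α/σ) := by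
        rw [rhog, phis]
        norm_num
      rw [h2]

lemma measurePreserving_Tm {d : ℕ} (m : Fin d → ℝ) {σ : ℝ} (hσ : 0 < σ) :
    MeasurePreserving (fun z : Fin d → ℝ => fun i => m i + σ * z i)
      (Measure.pi fun _ : Fin d => gaussianReal 0 1) (gaussPi d m (σ^2)) := by
  rw [gaussPi]
  refine measurePreserving_pi (f := fun i x => m i + σ * x) _ _ (fun i => ?_)
  refine ⟨by fun_prop, ?_⟩
  show Measure.map (fun x : ℝ => m i + σ * x) (gaussianReal 0 1)
    = gaussianReal (m i) (Real.toNNReal (σ^2))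
  have h1 : (fun x : ℝ => m i + σ * x) = (fun y => y + m i) ∘ (fun x => σ * x) := by
    funext x; simp [add_comm]
  rw [h1, ← Measure.map_map (by fun_prop) (by fun_prop)]
  have h2 := gaussianReal_map_const_mul (μ := 0) (v := 1) σ
  rw [show ((σ:ℝ) * ·) = fun x => σ * x from rfl] at h2
  rw [h2, mul_zero, show ∀ h, NNReal.mk (σ^2) h * 1 = Real.toNNReal (σ^2) from fun h => by ext; simp [Real.coe_toNNReal _ (sq_nonneg σ)]]
  have h3 := gaussianReal_map_add_const (μ := 0) (v := Real.toNNReal (σ^2)) (m i)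
  rw [show (· + m i) = fun y => y + m i from rfl] at h3
  rw [h3, zero_add]

lemma measurable_sgn_dot_mul_eval {d : ℕ} (v : Fin d → ℝ) (i : Fin d) :
    Measurable (fun x : Fin d → ℝ => sgn (dotp v x) * x i) := by
  have h1 : Measurable (fun x : Fin d → ℝ => dotp v x) := measurable_wsum v
  exact (measurable_sgn.comp h1).mul (measurable_pi_apply i)

lemma hdot {d : ℕ} (v m : Fin d → ℝ) (σ : ℝ) (z : Fin d → ℝ) :
    dotp v (fun i => m i + σ * z i) = dotp v m + σ * ∑ j, v j * z j := by
  simp only [dotp]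
  simp_rw [mul_add]
  rw [Finset.sum_add_distrib, Finset.mul_sum]
  congr 1
  apply Finset.sum_congr rfl
  intros; ring

lemma integrable_sgn_gausspi {d : ℕ} (A : ℝ) (σ : ℝ) (v : Fin d → ℝ) :
    Integrable (fun z : Fin d → ℝ => sgn (A + σ * ∑ j, v j * z j))
      (Measure.pi fun _ : Fin d => gaussianReal 0 1) := by
  refine (integrable_const (1:ℝ)).mono'
    ((measurable_sgn.comp (measurable_const.add
      ((measurable_wsum v).const_mul σ))).aestronglyMeasurable)
    (Filter.Eventually.of_forall fun z => ?_)
  rw [Real.norm_eq_abs, abs_sgn]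

lemma integrable_sgn_mul_eval_pi {d : ℕ} (A : ℝ) (σ : ℝ) (v : Fin d → ℝ) (i : Fin d) :
    Integrable (fun z : Fin d → ℝ => sgn (A + σ * ∑ j, v j * z j) * z i)
      (Measure.pi fun _ : Fin d => gaussianReal 0 1) := by
  refine (integrable_eval_pi i).abs.mono'
    (((measurable_sgn.comp (measurable_const.add
      ((measurable_wsum v).const_mul σ))).mul (measurable_pi_apply i)).aestronglyMeasurable)
    (Filter.Eventually.of_forall fun z => ?_)
  rw [Real.norm_eq_abs, abs_mul, abs_sgn, one_mul]

lemma integrable_comp_Tm {d : ℕ} (v m : Fin d → ℝ) {σ : ℝ} (hσ : 0 < σ) (i : Fin d) :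
    Integrable (fun z : Fin d → ℝ =>
        sgn (dotp v (fun i => m i + σ * z i)) * (m i + σ * z i))
      (Measure.pi fun _ : Fin d => gaussianReal 0 1) := by
  have hpt : ∀ z : Fin d → ℝ, sgn (dotp v (fun i => m i + σ * z i)) * (m i + σ * z i)
      = m i * sgn (dotp v m + σ * ∑ j, v j * z j)
        + σ * (sgn (dotp v m + σ * ∑ j, v j * z j) * z i) := by
    intro z
    rw [hdot v m σ z]
    ring
  refine (((integrable_sgn_gausspi (dotp v m) σ v).const_mul (m i)).add
    ((integrable_sgn_mul_eval_pi (dotp v m) σ v i).const_mul σ)).congr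
    (Filter.Eventually.of_forall fun z => (hpt z).symm)

lemma integrable_scalar {d : ℕ} (v m : Fin d → ℝ) {σ : ℝ} (hσ : 0 < σ) (i : Fin d) :
    Integrable (fun x => sgn (dotp v x) * x i) (gaussPi d m (σ^2)) := by
  have hmp := measurePreserving_Tm m hσ (d := d)
  rw [← hmp.map_eq,
    integrable_map_measure (measurable_sgn_dot_mul_eval v i).aestronglyMeasurable
      hmp.measurable.aemeasurable]
  exact integrable_comp_Tm v m hσ i

lemma Jcomp {n : ℕ} (v m : Fin (n+1) → ℝ) (hv : ∑ j, (v j)^2 = 1) {σ : ℝ} (hσ : 0 < σ)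
    (i : Fin (n+1)) :
    ∫ x, sgn (dotp v x) * x i ∂(gaussPi (n+1) m (σ^2))
      = (1 - 2 * stdQ (dotp v m / σ)) * m i
        + 2 * σ * v i * phis (dotp v m / σ) := by
  have hmp := measurePreserving_Tm m hσ (d := n+1)
  rw [← hmp.map_eq,
    integral_map hmp.measurable.aemeasurable
      (measurable_sgn_dot_mul_eval v i).aestronglyMeasurable]
  have hpt : ∀ z : Fin (n+1) → ℝ, sgn (dotp v (fun i => m i + σ * z i)) * (m i + σ * z i)
      = m i * sgn (dotp v m + σ * ∑ j, v j * z j)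
        + σ * (sgn (dotp v m + σ * ∑ j, v j * z j) * z i) := by
    intro z
    rw [hdot v m σ z]
    ring
  simp_rw [hpt]
  rw [integral_add ((integrable_sgn_gausspi (dotp v m) σ v).const_mul (m i))
    ((integrable_sgn_mul_eval_pi (dotp v m) σ v i).const_mul σ),
    integral_const_mul, integral_const_mul, lemA hv hσ (dotp v m), lemB hv hσ (dotp v m) i]
  ring

lemma integrable_vec {d : ℕ} (v : Fin d → ℝ) (μ : Measure (Fin d → ℝ))
    (h : ∀ i, Integrable (fun x => sgn (dotp v x) * x i) μ) :
    Integrable (fun x => sgn (dotp v x) • x) μ := by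
  have hrepr : (fun x : Fin d → ℝ => sgn (dotp v x) • x)
      = fun x => ∑ i, (sgn (dotp v x) * x i) • (Pi.single i (1:ℝ) : Fin d → ℝ) := by
    funext x
    funext j
    rw [Finset.sum_apply]
    simp_rw [Pi.smul_apply, smul_eq_mul]
    rw [Finset.sum_eq_single j]
    · simp
    · intro b _ hb; simp [Pi.single_apply, hb]
    · simp
  rw [hrepr]
  exact integrable_finset_sum _ fun i _ => (h i).smul_const _

lemma phis_div (α : ℝ) {σ : ℝ} (hσ : 0 < σ) :
    phis (α/σ) = Real.exp (-α^2/(2*σ^2)) / Real.sqrt (2*π) := by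
  rw [phis]
  have h : -(α/σ)^2/2 = -α^2/(2*σ^2) := by
    rw [div_pow, neg_div, div_div, mul_comm (σ^2) 2, ← neg_div]
  rw [h]

lemma stdQ_neg (x : ℝ) : stdQ (-x) = 1 - stdQ x := by
  rw [stdQ, stdQ, stdPhi_neg]


end AuxProofs

/-- the mean of one pseudo-labelled sample:
`E[sgn(v⊤X')·X'] = (1 − 2Q(α/σ))μ + (2σ/√(2π)) e^{−α²/(2σ²)} v`, and in the decomposition
`v = αμ + βυ` this equals
`(1 − 2Q(α/σ) + (2σα/√(2π)) e^{−α²/(2σ²)})μ + (2σβ/√(2π)) e^{−α²/(2σ²)} υ`. -/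
theorem stmt12 (d : ℕ) (μ0 : Fin d → ℝ) (hμ0 : dotp μ0 μ0 = 1) (σ : ℝ) (hσ : 0 < σ)
    (v : Fin d → ℝ) (hv : dotp v v = 1) (α : ℝ) (hα : α = dotp v μ0) :
    (∫ x, sgn (dotp v x) • x ∂(gmix d μ0 σ))
      = (1 - 2 * stdQ (α/σ)) • μ0
        + ((2*σ/Real.sqrt (2*π)) * Real.exp (-α^2/(2*σ^2))) • v ∧
    (∀ υ : Fin d → ℝ, dotp υ υ = 1 → dotp μ0 υ = 0 →
      ∀ β : ℝ, β = Real.sqrt (1 - α^2) → v = α • μ0 + β • υ →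
      (∫ x, sgn (dotp v x) • x ∂(gmix d μ0 σ))
        = (1 - 2 * stdQ (α/σ) + (2*σ*α/Real.sqrt (2*π)) * Real.exp (-α^2/(2*σ^2))) • μ0
          + ((2*σ*β/Real.sqrt (2*π)) * Real.exp (-α^2/(2*σ^2))) • υ) := by
  have main : (∫ x, sgn (dotp v x) • x ∂(gmix d μ0 σ))
      = (1 - 2 * stdQ (α/σ)) • μ0
        + ((2*σ/Real.sqrt (2*π)) * Real.exp (-α^2/(2*σ^2))) • v := by
    cases d with
    | zero =>
      exfalso
      simp [dotp] at hv
    | succ n =>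
      have hv' : ∑ j, (v j)^2 = 1 := by
        rw [← hv, dotp]
        apply Finset.sum_congr rfl
        intros; rw [sq]
      have hI1 : ∀ i, Integrable (fun x => sgn (dotp v x) * x i)
          (gaussPi (n+1) μ0 (σ^2)) := fun i => integrable_scalar v μ0 hσ i
      have hI2 : ∀ i, Integrable (fun x => sgn (dotp v x) * x i)
          (gaussPi (n+1) (-μ0) (σ^2)) := fun i => integrable_scalar v (-μ0) hσ i
      have hV1 := integrable_vec v _ hI1
      have hV2 := integrable_vec v _ hI2
      have hmix : (∫ x, sgn (dotp v x) • x ∂(gmix (n+1) μ0 σ))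
          = (1/2 : ℝ) • (∫ x, sgn (dotp v x) • x ∂(gaussPi (n+1) μ0 (σ^2)))
            + (1/2 : ℝ) • (∫ x, sgn (dotp v x) • x ∂(gaussPi (n+1) (-μ0) (σ^2))) := by
        rw [gmix, integral_add_measure (hV1.smul_measure (by norm_num))
          (hV2.smul_measure (by norm_num)), integral_smul_measure, integral_smul_measure]
        norm_num
      rw [hmix]
      funext i
      have hproj1 := (ContinuousLinearMap.proj (R := ℝ) (φ := fun _ : Fin (n+1) => ℝ)
        i).integral_comp_comm hV1
      have hproj2 := (ContinuousLinearMap.proj (R := ℝ) (φ := fun _ : Fin (n+1) => ℝ)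
        i).integral_comp_comm hV2
      simp only [ContinuousLinearMap.proj_apply] at hproj1 hproj2
      have happ1 : (∫ x, sgn (dotp v x) • x ∂(gaussPi (n+1) μ0 (σ^2))) i
          = ∫ x, sgn (dotp v x) * x i ∂(gaussPi (n+1) μ0 (σ^2)) := by
        rw [← hproj1]
        simp only [Pi.smul_apply, smul_eq_mul]
      have happ2 : (∫ x, sgn (dotp v x) • x ∂(gaussPi (n+1) (-μ0) (σ^2))) i
          = ∫ x, sgn (dotp v x) * x i ∂(gaussPi (n+1) (-μ0) (σ^2)) := by
        rw [← hproj2]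
        simp only [Pi.smul_apply, smul_eq_mul]
      simp only [Pi.add_apply, Pi.smul_apply, smul_eq_mul]
      rw [happ1, happ2, Jcomp v μ0 hv' hσ i, Jcomp v (-μ0) hv' hσ i]
      have hdotneg : dotp v (-μ0) = -α := by
        rw [hα, dotp, dotp, ← Finset.sum_neg_distrib]
        apply Finset.sum_congr rfl
        intros j _
        simp
      rw [hdotneg, ← hα]
      rw [show -α/σ = -(α/σ) by ring, stdQ_neg, phis_neg]
      simp only [Pi.neg_apply]
      rw [phis_div α hσ]
      ring
  refine ⟨main, ?_⟩
  intro υ hυ hperp β hβ hvdec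
  rw [main, hvdec]
  funext i
  simp only [Pi.add_apply, Pi.smul_apply, smul_eq_mul]
  ring
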